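/- Let n, d ∈ ℕ, t > 0, let γ be the product probability measure on ℝ^{n×d} under which the n·d entries are i.i.d. centered Gaussian with variance t, let a ∈ ℝ^{d×n}, and let b be a symmetric positive semidefinite d×d real matrix. Then ∫_{ℝ^{n×d}} exp( −2 Tr(W a) − Tr(b Wᵀ W) ) γ(dW) = det(2tb + I_d)^{−n/2} · exp( 2 Tr( aᵀ (2b + t^{-1} I_d)^{-1} a ) ), where I_d is the d×d identity matrix and Tr denotes the trace. -/

import Mathlib

open scoped Matrix NNReal
open MeasureTheory

open Real ProbabilityTheory Matrix
open scoped ENNReal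

lemma aux_exp_integral {m : ℝ} (hm : 0 < m) (c : ℝ) :
    ∫ y : ℝ, Real.exp (-(m * y ^ 2) - c * y)
      = Real.sqrt (Real.pi / m) * Real.exp (c ^ 2 / (4 * m)) := by
  have h : ∀ y : ℝ, Real.exp (-(m * y ^ 2) - c * y)
      = Real.exp (-m * (y + c / (2 * m)) ^ 2) * Real.exp (c ^ 2 / (4 * m)) := by
    intro y; rw [← Real.exp_add]; congr 1; field_simp; ring
  simp_rw [h, integral_mul_const]
  rw [integral_add_right_eq_self (fun y => Real.exp (-m * y ^ 2)) (c / (2 * m)),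
    integral_gaussian]

lemma lintegral_pi_prod : ∀ {m : ℕ} {α : Type} [inst : MeasurableSpace α]
    (μ : Fin m → Measure α) [∀ i, SigmaFinite (μ i)]
    (g : Fin m → α → ℝ≥0∞) (_ : ∀ i, Measurable (g i)),
    ∫⁻ x : Fin m → α, ∏ i, g i (x i) ∂Measure.pi μ = ∏ i, ∫⁻ y, g i y ∂μ i := by
  intro m
  induction m with
  | zero =>
    intro α inst μ _ g hg
    simp [lintegral_const, Measure.pi_univ]
  | succ m ih =>
    intro α inst μ _ g hg
    have h := (measurePreserving_piFinSuccAbove μ 0).symm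
    calc ∫⁻ x : Fin (m+1) → α, ∏ i, g i (x i) ∂Measure.pi μ
        = ∫⁻ p : α × (Fin m → α),
            ∏ i, g i ((MeasurableEquiv.piFinSuccAbove (fun _ => α) 0).symm p i)
            ∂((μ 0).prod (Measure.pi fun i => μ ((0:Fin (m+1)).succAbove i))) := by
          rw [← h.lintegral_comp]
          exact Finset.measurable_prod _ fun i _ => (hg i).comp (measurable_pi_apply i)
      _ = ∫⁻ p : α × (Fin m → α),
            g 0 p.1 * ∏ i : Fin m, g (Fin.succ i) (p.2 i)
            ∂((μ 0).prod (Measure.pi fun i => μ ((0:Fin (m+1)).succAbove i))) := by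
          congr 1
          ext p
          simp_rw [MeasurableEquiv.piFinSuccAbove_symm_apply, Fin.insertNthEquiv,
            Fin.prod_univ_succ, Fin.insertNth_zero, Equiv.coe_fn_mk, Fin.cons_succ,
            Fin.cons_zero]
          simp
      _ = (∫⁻ y, g 0 y ∂μ 0) * ∏ i : Fin m, ∫⁻ y, g (Fin.succ i) y ∂μ (Fin.succ i) := by
          simp_rw [Fin.zero_succAbove]
          refine (lintegral_prod_mul (f := g 0)
            (g := fun y : Fin m → α => ∏ i : Fin m, g (Fin.succ i) (y i))
            ((hg 0).aemeasurable)
            ((Finset.measurable_prod _ fun i _ =>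
              (hg (Fin.succ i)).comp (measurable_pi_apply i)).aemeasurable)).trans ?_
          congr 1
          exact ih _ _ fun i => hg (Fin.succ i)
      _ = ∏ i, ∫⁻ y, g i y ∂μ i := by rw [Fin.prod_univ_succ]

lemma pi_withDensity {m : ℕ} {α : Type} [MeasurableSpace α]
    (μ : Fin m → Measure α) [∀ i, SigmaFinite (μ i)]
    (g : Fin m → α → ℝ≥0∞) (hg : ∀ i, Measurable (g i))
    (hsf : ∀ i, SigmaFinite ((μ i).withDensity (g i))) :
    Measure.pi (fun i => (μ i).withDensity (g i))
      = (Measure.pi μ).withDensity (fun x => ∏ i, g i (x i)) := by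
  haveI := hsf
  refine (Measure.pi_eq fun s hs => ?_)
  rw [withDensity_apply _ (MeasurableSet.univ_pi hs),
    ← lintegral_indicator (MeasurableSet.univ_pi hs)]
  have hpt : ∀ x : Fin m → α,
      Set.indicator (Set.univ.pi s) (fun x => ∏ i, g i (x i)) x
        = ∏ i, Set.indicator (s i) (g i) (x i) := by
    intro x
    by_cases hx : x ∈ Set.univ.pi s
    · rw [Set.indicator_of_mem hx]
      exact Finset.prod_congr rfl fun i _ =>
        (Set.indicator_of_mem (hx i (Set.mem_univ i)) _).symm
    · rw [Set.indicator_of_notMem hx]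
      rw [Set.mem_univ_pi] at hx
      push_neg at hx
      obtain ⟨i, hi⟩ := hx
      exact (Finset.prod_eq_zero (Finset.mem_univ i)
        (Set.indicator_of_notMem hi _)).symm
  simp_rw [hpt]
  rw [lintegral_pi_prod μ _ (fun i => (hg i).indicator (hs i))]
  exact Finset.prod_congr rfl fun i _ => by
    rw [lintegral_indicator (hs i), withDensity_apply _ (hs i)]

lemma gaussian_pi_eq (m : ℕ) (t : ℝ≥0) (ht : t ≠ 0) :
    (Measure.pi fun _ : Fin m => gaussianReal 0 t)
      = (volume : Measure (Fin m → ℝ)).withDensity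
          (fun x => ∏ j, ENNReal.ofReal (gaussianPDFReal 0 t (x j))) := by
  have hsf : ∀ _ : Fin m, SigmaFinite ((volume : Measure ℝ).withDensity (gaussianPDF 0 t)) := by
    intro _
    rw [← gaussianReal_of_var_ne_zero 0 ht]
    infer_instance
  have h0 : (fun _ : Fin m => gaussianReal 0 t)
      = fun _ : Fin m => (volume : Measure ℝ).withDensity (gaussianPDF 0 t) :=
    funext fun _ => gaussianReal_of_var_ne_zero 0 ht
  rw [h0, pi_withDensity _ _ (fun _ => measurable_gaussianPDF 0 t) hsf, ← volume_pi]
  rfl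

lemma integral_gaussian_pi_pi (n d : ℕ) (t : ℝ≥0) (ht : t ≠ 0)
    (f : (Fin n → Fin d → ℝ) → ℝ) :
    (∫ W, f W ∂(Measure.pi fun _ : Fin n => Measure.pi fun _ : Fin d => gaussianReal 0 t))
      = ∫ W : Fin n → Fin d → ℝ, (∏ i, ∏ j, gaussianPDFReal 0 t (W i j)) * f W := by
  haveI hP : IsProbabilityMeasure ((volume : Measure (Fin d → ℝ)).withDensity
      (fun x => ∏ j, ENNReal.ofReal (gaussianPDFReal 0 t (x j)))) := by
    rw [← gaussian_pi_eq d t ht]; infer_instance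
  have hGm : Measurable (fun x : Fin d → ℝ => ∏ j, ENNReal.ofReal (gaussianPDFReal 0 t (x j))) :=
    Finset.measurable_prod _ fun j _ =>
      ((measurable_gaussianPDFReal 0 t).comp (measurable_pi_apply j)).ennreal_ofReal
  calc (∫ W, f W ∂(Measure.pi fun _ : Fin n => Measure.pi fun _ : Fin d => gaussianReal 0 t))
      = ∫ W, f W ∂((volume : Measure (Fin n → Fin d → ℝ)).withDensity
          (fun W => ∏ i, ∏ j, ENNReal.ofReal (gaussianPDFReal 0 t (W i j)))) := by
        rw [show (fun _ : Fin n => Measure.pi fun _ : Fin d => gaussianReal 0 t)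
            = fun _ : Fin n => (volume : Measure (Fin d → ℝ)).withDensity
              (fun x => ∏ j, ENNReal.ofReal (gaussianPDFReal 0 t (x j))) from
          funext fun _ => gaussian_pi_eq d t ht]
        rw [pi_withDensity _ _ (fun _ => hGm) (fun _ => inferInstance), ← volume_pi]
      _ = ∫ W : Fin n → Fin d → ℝ, (∏ i, ∏ j, gaussianPDFReal 0 t (W i j)) * f W := by
        have hd : (fun W : Fin n → Fin d → ℝ =>
            ∏ i, ∏ j, ENNReal.ofReal (gaussianPDFReal 0 t (W i j)))
            = fun W => ((∏ i, ∏ j, Real.toNNReal (gaussianPDFReal 0 t (W i j)) : ℝ≥0) : ℝ≥0∞) := by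
          funext W
          push_cast
          rfl
        rw [hd]
        refine (integral_withDensity_eq_integral_smul
          (f := fun W : Fin n → Fin d → ℝ =>
            ∏ i, ∏ j, Real.toNNReal (gaussianPDFReal 0 t (W i j)))
          (Finset.measurable_prod _ fun i _ => Finset.measurable_prod _ fun j _ =>
            ((measurable_gaussianPDFReal 0 t).comp
              ((measurable_pi_apply j).comp (measurable_pi_apply i))).real_toNNReal) f).trans ?_
        congr 1
        funext W
        rw [NNReal.smul_def]
        push_cast
        rw [Finset.prod_congr rfl fun i _ => Finset.prod_congr rfl fun j _ =>
          Real.coe_toNNReal _ (gaussianPDFReal_nonneg 0 t (W i j)), smul_eq_mul]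

lemma conj_affine {d : ℕ} {V : Matrix (Fin d) (Fin d) ℝ} (hV1 : V * Vᵀ = 1)
    (Dg : Fin d → ℝ) (α β : ℝ) :
    α • (V * Matrix.diagonal Dg * Vᵀ) + β • (1 : Matrix (Fin d) (Fin d) ℝ)
      = V * Matrix.diagonal (fun j => α * Dg j + β) * Vᵀ := by
  have h1 : Matrix.diagonal (fun j => α * Dg j + β)
      = α • Matrix.diagonal Dg + β • (1 : Matrix (Fin d) (Fin d) ℝ) := by
    ext i j
    by_cases h : i = j <;> simp [Matrix.diagonal_apply, Matrix.one_apply, h]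
  rw [h1, Matrix.mul_add, Matrix.add_mul, Matrix.mul_smul, Matrix.smul_mul,
    Matrix.mul_smul, Matrix.smul_mul, Matrix.mul_one, hV1]

lemma conj_det {d : ℕ} {V : Matrix (Fin d) (Fin d) ℝ} (hV1 : V * Vᵀ = 1)
    (A : Matrix (Fin d) (Fin d) ℝ) : (V * A * Vᵀ).det = A.det := by
  have h : V.det * Vᵀ.det = 1 := by rw [← Matrix.det_mul, hV1, Matrix.det_one]
  rw [Matrix.det_mul, Matrix.det_mul]
  linear_combination A.det * h

lemma conj_dot {d : ℕ} {V : Matrix (Fin d) (Fin d) ℝ} (hV2 : Vᵀ * V = 1)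
    (A : Matrix (Fin d) (Fin d) ℝ) (y z : Fin d → ℝ) :
    (V *ᵥ y) ⬝ᵥ (V * A * Vᵀ) *ᵥ (V *ᵥ z) = y ⬝ᵥ A *ᵥ z := by
  have h3 : V * A * Vᵀ * V = V * A := by rw [mul_assoc, hV2, mul_one]
  have h4 : (V *ᵥ y) ᵥ* V = y := by
    have : (V *ᵥ y) ᵥ* (Vᵀ)ᵀ = Vᵀ *ᵥ (V *ᵥ y) := Matrix.vecMul_transpose _ _
    rw [Matrix.transpose_transpose] at this
    rw [this, Matrix.mulVec_mulVec, hV2, Matrix.one_mulVec]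
  rw [Matrix.mulVec_mulVec, h3, Matrix.dotProduct_mulVec, ← Matrix.vecMul_vecMul, h4,
    ← Matrix.dotProduct_mulVec]

lemma conj_mul_one {d : ℕ} {V : Matrix (Fin d) (Fin d) ℝ} (hV1 : V * Vᵀ = 1) (hV2 : Vᵀ * V = 1)
    (f g : Fin d → ℝ) (hfg : ∀ j, f j * g j = 1) :
    (V * Matrix.diagonal f * Vᵀ) * (V * Matrix.diagonal g * Vᵀ) = 1 := by
  simp only [Matrix.mul_assoc]
  rw [← Matrix.mul_assoc Vᵀ V, hV2, Matrix.one_mul,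
    ← Matrix.mul_assoc (Matrix.diagonal f) (Matrix.diagonal g), Matrix.diagonal_mul_diagonal]
  have h5 : (fun j => f j * g j) = fun _ => (1:ℝ) := funext hfg
  rw [h5]
  rw [show Matrix.diagonal (fun _ : Fin d => (1:ℝ)) = 1 from Matrix.diagonal_one]
  rw [Matrix.one_mul, hV1]

lemma row_integral (d : ℕ) (t : ℝ≥0) (ht : 0 < t) (b : Matrix (Fin d) (Fin d) ℝ)
    (hb : b.PosSemidef) (c : Fin d → ℝ) :
    (∫ x : Fin d → ℝ, (∏ j, gaussianPDFReal 0 t (x j)) *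
        Real.exp (-2 * (c ⬝ᵥ x) - x ⬝ᵥ b *ᵥ x))
    = (((2:ℝ) * t) • b + 1).det ^ (-(1:ℝ)/2)
        * Real.exp (2 * (c ⬝ᵥ ((2:ℝ) • b + (t:ℝ)⁻¹ • 1)⁻¹ *ᵥ c)) := by
  have ht' : (0:ℝ) < t := ht
  set V : Matrix (Fin d) (Fin d) ℝ := (hb.1.eigenvectorUnitary : Matrix (Fin d) (Fin d) ℝ)
    with hVdef
  set D : Fin d → ℝ := hb.1.eigenvalues with hDdef
  have hV1 : V * Vᵀ = 1 := by
    have := (Matrix.mem_unitaryGroup_iff).mp hb.1.eigenvectorUnitary.2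
    simpa [Matrix.star_eq_conjTranspose] using this
  have hV2 : Vᵀ * V = 1 := by
    have := (Matrix.mem_unitaryGroup_iff').mp hb.1.eigenvectorUnitary.2
    simpa [Matrix.star_eq_conjTranspose] using this
  have hdec : b = V * Matrix.diagonal D * Vᵀ := by
    have := hb.1.spectral_theorem
    simpa [Matrix.star_eq_conjTranspose] using this
  have hD0 : ∀ j, 0 ≤ D j := hb.eigenvalues_nonneg
  set K : ℝ := (Real.sqrt (2 * π * t))⁻¹ with hKdef
  set mm : Fin d → ℝ := fun j => D j + (2 * (t:ℝ))⁻¹ with hmmdef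
  have hmpos : ∀ j, 0 < mm j := fun j => by
    have h2 : (0:ℝ) < (2 * (t:ℝ))⁻¹ := by positivity
    exact add_pos_of_nonneg_of_pos (hD0 j) h2
  set c' : Fin d → ℝ := Vᵀ *ᵥ c with hc'def
  have hz : ∀ j, (0:ℝ) < 2*(t:ℝ)*D j + 1 := fun j => by
    have h0 : (0:ℝ) ≤ 2*(t:ℝ)*D j := mul_nonneg (by positivity) (hD0 j)
    linarith
  have hdet2 : V.det * V.det = 1 := by
    have := congrArg Matrix.det hV1
    rwa [Matrix.det_mul, Matrix.det_transpose, Matrix.det_one] at this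
  have hdetne : V.det ≠ 0 := by
    intro h; rw [h, mul_zero] at hdet2; exact zero_ne_one hdet2
  have habs : |V.det| = 1 := by
    nlinarith [abs_nonneg V.det, abs_mul_abs_self V.det]
  have hmap : Measure.map (Matrix.toLin' V) (volume : Measure (Fin d → ℝ)) = volume := by
    rw [Real.map_matrix_volume_pi_eq_smul_volume_pi hdetne, abs_inv, habs]
    simp
  have hdot : ∀ x : Fin d → ℝ, x ⬝ᵥ b *ᵥ x = ∑ i, ∑ j, x i * (b i j * x j) := by
    intro x
    simp [dotProduct, Matrix.mulVec, Finset.mul_sum]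
  have hFc : Continuous (fun x : Fin d → ℝ => (∏ j, gaussianPDFReal 0 t (x j)) *
      Real.exp (-2 * (c ⬝ᵥ x) - x ⬝ᵥ b *ᵥ x)) := by
    simp only [hdot]
    unfold gaussianPDFReal dotProduct
    fun_prop
  have key : (∫ x : Fin d → ℝ, (∏ j, gaussianPDFReal 0 t (x j)) *
        Real.exp (-2 * (c ⬝ᵥ x) - x ⬝ᵥ b *ᵥ x))
      = ∫ y : Fin d → ℝ, (∏ j, gaussianPDFReal 0 t ((V *ᵥ y) j)) *
        Real.exp (-2 * (c ⬝ᵥ (V *ᵥ y)) - (V *ᵥ y) ⬝ᵥ b *ᵥ (V *ᵥ y)) := by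
    conv_lhs => rw [← hmap]
    rw [integral_map (Matrix.toLin' V).continuous_of_finiteDimensional.aemeasurable
      hFc.aestronglyMeasurable]
    simp_rw [Matrix.toLin'_apply]
  rw [key]
  have hpdf : ∀ z : ℝ, gaussianPDFReal 0 t z = K * Real.exp (-(z^2) / (2*(t:ℝ))) := by
    intro z
    rw [gaussianPDFReal, sub_zero, ← hKdef]
  have hvc : V *ᵥ c' = c := by
    rw [hc'def, Matrix.mulVec_mulVec, hV1, Matrix.one_mulVec]
  have hx3 : ∀ y : Fin d → ℝ, c ⬝ᵥ (V *ᵥ y) = ∑ j, c' j * y j := by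
    intro y
    have h5 : c ᵥ* V = c' := by
      calc c ᵥ* V = c ᵥ* (Vᵀ)ᵀ := by rw [Matrix.transpose_transpose]
        _ = Vᵀ *ᵥ c := Matrix.vecMul_transpose _ _
    rw [Matrix.dotProduct_mulVec, h5]
    rfl
  have hpt : ∀ y : Fin d → ℝ, (∏ j, gaussianPDFReal 0 t ((V *ᵥ y) j)) *
        Real.exp (-2 * (c ⬝ᵥ (V *ᵥ y)) - (V *ᵥ y) ⬝ᵥ b *ᵥ (V *ᵥ y))
      = ∏ j, (K * Real.exp (-(mm j * (y j) ^ 2) - (2 * c' j) * (y j))) := by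
    intro y
    have hx1 : ∑ j, ((V *ᵥ y) j)^2 = ∑ j, (y j)^2 := by
      have h := conj_dot hV2 1 y y
      rw [Matrix.mul_one, hV1, Matrix.one_mulVec] at h
      simpa [dotProduct, pow_two] using h
    have hx2 : (V *ᵥ y) ⬝ᵥ b *ᵥ (V *ᵥ y) = ∑ j, D j * (y j)^2 := by
      rw [hdec, conj_dot hV2]
      simp only [dotProduct, Matrix.mulVec_diagonal]
      exact Finset.sum_congr rfl fun j _ => by ring
    calc (∏ j, gaussianPDFReal 0 t ((V *ᵥ y) j)) *
        Real.exp (-2 * (c ⬝ᵥ (V *ᵥ y)) - (V *ᵥ y) ⬝ᵥ b *ᵥ (V *ᵥ y))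
        = (K ^ d * Real.exp (∑ j, -(((V *ᵥ y) j)^2) / (2*(t:ℝ)))) *
            Real.exp (-2 * (∑ j, c' j * y j) - ∑ j, D j * (y j)^2) := by
          rw [hx2, hx3]
          congr 1
          simp_rw [hpdf]
          rw [Finset.prod_mul_distrib, Finset.prod_const, ← Real.exp_sum]
          simp
      _ = K ^ d * Real.exp (∑ j, (-(mm j * (y j) ^ 2) - (2 * c' j) * (y j))) := by
          rw [mul_assoc, ← Real.exp_add]
          congr 2
          have hs1 : ∑ j, -(((V *ᵥ y) j)^2) / (2*(t:ℝ)) = ∑ j, -((y j)^2) / (2*(t:ℝ)) := by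
            simp_rw [neg_div]
            rw [Finset.sum_neg_distrib, Finset.sum_neg_distrib, ← Finset.sum_div,
              ← Finset.sum_div, hx1]
          rw [hs1, Finset.mul_sum, ← Finset.sum_sub_distrib, ← Finset.sum_add_distrib]
          exact Finset.sum_congr rfl fun j _ => by rw [hmmdef]; ring
      _ = ∏ j, (K * Real.exp (-(mm j * (y j) ^ 2) - (2 * c' j) * (y j))) := by
          rw [Finset.prod_mul_distrib, Finset.prod_const, ← Real.exp_sum]
          simp
  simp_rw [hpt]
  rw [volume_pi, MeasureTheory.integral_fintype_prod_eq_prod (ι := Fin d)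
    (f := fun j (z : ℝ) => K * Real.exp (-(mm j * z ^ 2) - (2 * c' j) * z))]
  have hint : ∀ j, (∫ z : ℝ, K * Real.exp (-(mm j * z ^ 2) - (2 * c' j) * z))
      = (2*(t:ℝ)*D j + 1) ^ (-(1:ℝ)/2) * Real.exp ((c' j)^2 / mm j) := by
    intro j
    rw [MeasureTheory.integral_const_mul, aux_exp_integral (hmpos j)]
    have hz0 : (0:ℝ) ≤ 2*(t:ℝ)*D j + 1 := (hz j).le
    have hKm : K * Real.sqrt (π / mm j) = (2*(t:ℝ)*D j + 1) ^ (-(1:ℝ)/2) := by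
      have h1 : K * Real.sqrt (π / mm j) = Real.sqrt ((2*(t:ℝ)*D j + 1)⁻¹) := by
        rw [hKdef, ← Real.sqrt_inv, ← Real.sqrt_mul
          (inv_nonneg.mpr (mul_nonneg (mul_nonneg (by norm_num) Real.pi_pos.le)
            (NNReal.coe_nonneg t)))]
        congr 1
        have h2mm : 2*(t:ℝ)*D j + 1 = (2*(t:ℝ)) * mm j := by
          simp only [hmmdef]
          rw [mul_add, mul_inv_cancel₀ (by positivity : (2*(t:ℝ)) ≠ 0)]
        rw [h2mm, mul_inv, div_eq_mul_inv]
        field_simp [ht'.ne', Real.pi_ne_zero, (hmpos j).ne']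
      rw [h1, Real.sqrt_eq_rpow, Real.inv_rpow hz0, ← Real.rpow_neg hz0]
      norm_num
    have hexp : (2 * c' j)^2 / (4 * mm j) = (c' j)^2 / mm j := by
      rw [show (2 * c' j)^2 = 4 * (c' j)^2 by ring, mul_div_mul_left _ _ (by norm_num : (4:ℝ) ≠ 0)]
    rw [← mul_assoc, hKm, hexp]
  simp_rw [hint]
  rw [Finset.prod_mul_distrib]
  congr 1
  · rw [Real.finset_prod_rpow _ _ (fun j _ => (hz j).le) (-(1:ℝ)/2)]
    congr 1
    have h6 := conj_affine hV1 D (2*(t:ℝ)) 1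
    rw [one_smul, ← hdec] at h6
    rw [h6, conj_det hV1, Matrix.det_diagonal]
  · rw [← Real.exp_sum]
    congr 1
    have hM : (2:ℝ) • b + (t:ℝ)⁻¹ • 1 = V * Matrix.diagonal (fun j => 2 * D j + (t:ℝ)⁻¹) * Vᵀ := by
      conv_lhs => rw [hdec]
      exact conj_affine hV1 D 2 (t:ℝ)⁻¹
    have hpos2 : ∀ j, (0:ℝ) < 2 * D j + (t:ℝ)⁻¹ := fun j =>
      add_pos_of_nonneg_of_pos (mul_nonneg two_pos.le (hD0 j)) (by positivity)
    have hMinv : ((2:ℝ) • b + (t:ℝ)⁻¹ • 1)⁻¹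
        = V * Matrix.diagonal (fun j => (2 * D j + (t:ℝ)⁻¹)⁻¹) * Vᵀ := by
      apply Matrix.inv_eq_right_inv
      rw [hM]
      exact conj_mul_one hV1 hV2 _ _ fun j => mul_inv_cancel₀ (hpos2 j).ne'
    have hcMc : c ⬝ᵥ ((2:ℝ) • b + (t:ℝ)⁻¹ • 1)⁻¹ *ᵥ c
        = ∑ j, (2 * D j + (t:ℝ)⁻¹)⁻¹ * (c' j)^2 := by
      rw [hMinv, ← hvc, conj_dot hV2]
      simp only [dotProduct, Matrix.mulVec_diagonal]
      exact Finset.sum_congr rfl fun j _ => by ring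
    rw [hcMc, Finset.mul_sum]
    refine Finset.sum_congr rfl fun j _ => ?_
    have h2m : 2 * D j + (t:ℝ)⁻¹ = 2 * mm j := by
      simp only [hmmdef]
      rw [mul_add, mul_inv, ← mul_assoc, mul_inv_cancel₀ (two_ne_zero), one_mul]
    rw [h2m, mul_inv, div_eq_mul_inv]
    ring

lemma shift_det_pos (d : ℕ) (t : ℝ≥0) (b : Matrix (Fin d) (Fin d) ℝ) (hb : b.PosSemidef) :
    0 < (((2:ℝ) * t) • b + 1).det := by
  set V : Matrix (Fin d) (Fin d) ℝ := (hb.1.eigenvectorUnitary : Matrix (Fin d) (Fin d) ℝ)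
  set D : Fin d → ℝ := hb.1.eigenvalues
  have hV1 : V * Vᵀ = 1 := by
    have := (Matrix.mem_unitaryGroup_iff).mp hb.1.eigenvectorUnitary.2
    simpa [Matrix.star_eq_conjTranspose] using this
  have hdec : b = V * Matrix.diagonal D * Vᵀ := by
    have := hb.1.spectral_theorem
    simpa [Matrix.star_eq_conjTranspose] using this
  have hD0 : ∀ j, 0 ≤ D j := hb.eigenvalues_nonneg
  have h6 := conj_affine hV1 D (2*(t:ℝ)) 1
  rw [one_smul, ← hdec] at h6
  rw [h6, conj_det hV1, Matrix.det_diagonal]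
  exact Finset.prod_pos fun j _ => by
    have h0 : (0:ℝ) ≤ 2*(t:ℝ)*D j := mul_nonneg (by positivity) (hD0 j)
    linarith

/-- **Laplace transform of the square of a matrix Gaussian.**  For an `n × d` matrix `W`
of i.i.d. centered Gaussian entries with variance `t`,
`E[exp(-2 Tr(W a) - Tr(b Wᵀ W))] = det(2tb + I)^{-n/2} exp(2 Tr(aᵀ (2b + t⁻¹ I)⁻¹ a))`. -/
theorem matrix_gaussian_laplace_transform
    (n d : ℕ) (t : ℝ≥0) (ht : 0 < t)
    (a : Matrix (Fin d) (Fin n) ℝ) (b : Matrix (Fin d) (Fin d) ℝ) (hb : b.PosSemidef) :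
    (∫ W : Fin n → Fin d → ℝ,
        Real.exp (-2 * (Matrix.of W * a).trace - (b * (Matrix.of W)ᵀ * Matrix.of W).trace)
        ∂(Measure.pi fun _ : Fin n => Measure.pi fun _ : Fin d =>
            ProbabilityTheory.gaussianReal 0 t)) =
      ((((2 : ℝ) * t) • b + 1).det) ^ (-(n : ℝ) / 2) *
        Real.exp (2 * (aᵀ * ((2 : ℝ) • b + (t : ℝ)⁻¹ • 1)⁻¹ * a).trace) := by
  rw [integral_gaussian_pi_pi n d t ht.ne' _]
  have hTr1 : ∀ W : Fin n → Fin d → ℝ,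
      (Matrix.of W * a).trace = ∑ i, (fun j => a j i) ⬝ᵥ (W i) := by
    intro W
    simp only [Matrix.trace, Matrix.diag, Matrix.mul_apply, Matrix.of_apply, dotProduct]
    exact Finset.sum_congr rfl fun i _ => Finset.sum_congr rfl fun j _ => mul_comm _ _
  have hTr2 : ∀ W : Fin n → Fin d → ℝ,
      (b * (Matrix.of W)ᵀ * Matrix.of W).trace = ∑ i, (W i) ⬝ᵥ b *ᵥ (W i) := by
    intro W
    rw [Matrix.trace_mul_cycle]
    simp only [Matrix.trace, Matrix.diag, Matrix.mul_apply, Matrix.of_apply,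
      Matrix.transpose_apply, dotProduct, Matrix.mulVec]
    refine Finset.sum_congr rfl fun i _ => ?_
    simp_rw [Finset.sum_mul, Finset.mul_sum]
    rw [Finset.sum_comm]
    exact Finset.sum_congr rfl fun l _ => Finset.sum_congr rfl fun k _ => by ring
  have hpt : ∀ W : Fin n → Fin d → ℝ,
      (∏ i, ∏ j, gaussianPDFReal 0 t (W i j)) *
        Real.exp (-2 * (Matrix.of W * a).trace - (b * (Matrix.of W)ᵀ * Matrix.of W).trace)
      = ∏ i, ((∏ j, gaussianPDFReal 0 t (W i j)) *
          Real.exp (-2 * ((fun j => a j i) ⬝ᵥ (W i)) - (W i) ⬝ᵥ b *ᵥ (W i))) := by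
    intro W
    rw [Finset.prod_mul_distrib, hTr1, hTr2, Finset.mul_sum, ← Finset.sum_sub_distrib,
      Real.exp_sum]
  simp_rw [hpt]
  rw [volume_pi, MeasureTheory.integral_fintype_prod_eq_prod (ι := Fin n)
    (f := fun i (x : Fin d → ℝ) => (∏ j, gaussianPDFReal 0 t (x j)) *
      Real.exp (-2 * ((fun j => a j i) ⬝ᵥ x) - x ⬝ᵥ b *ᵥ x))]
  simp_rw [row_integral d t ht b hb]
  rw [Finset.prod_mul_distrib, Finset.prod_const, Finset.card_univ, Fintype.card_fin,
    ← Real.exp_sum]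
  have hdet0 := shift_det_pos d t b hb
  congr 1
  · rw [← Real.rpow_natCast ((((2:ℝ)*t) • b + 1).det ^ (-(1:ℝ)/2)) n,
      ← Real.rpow_mul hdet0.le]
    congr 1
    push_cast
    ring
  · have hTr3 : (aᵀ * ((2:ℝ) • b + (t:ℝ)⁻¹ • 1)⁻¹ * a).trace
        = ∑ i, (fun j => a j i) ⬝ᵥ (((2:ℝ) • b + (t:ℝ)⁻¹ • 1)⁻¹ *ᵥ fun j => a j i) := by
      simp only [Matrix.trace, Matrix.diag, Matrix.mul_apply, Matrix.transpose_apply,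
        dotProduct, Matrix.mulVec]
      refine Finset.sum_congr rfl fun i _ => ?_
      simp_rw [Finset.sum_mul, Finset.mul_sum]
      rw [Finset.sum_comm]
      exact Finset.sum_congr rfl fun l _ => Finset.sum_congr rfl fun k _ => by ring
    rw [hTr3, Finset.mul_sum]
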